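/- Let σ, σ_1, …, σ_n ≥ 0 be real numbers and p_1,…,p_n ∈ (0,1) with Σ_i p_i = 1. Then the statement 'for all x_1,…,x_n ∈ R with Σ_i p_i x_i = 0, N_1(0,σ²) ≤_cx Σ_i p_i N_1(x_i,σ_i²)' holds if and only if σ ≤ Σ_i p_i σ_i. -/

import Mathlib

open MeasureTheory ProbabilityTheory Matrix

noncomputable def stdGaussianPi (d : ℕ) : Measure (Fin d → ℝ) :=
  Measure.pi fun _ => gaussianReal 0 1

/-- The positive semidefinite square root of a positive semidefinite matrix
(the definition removed from Mathlib, restored verbatim). -/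
noncomputable def Matrix.PosSemidef.sqrt {n : Type*} [Fintype n] [DecidableEq n]
    {A : Matrix n n ℝ} (hA : A.PosSemidef) : Matrix n n ℝ :=
  hA.1.eigenvectorUnitary.1 * diagonal ((√·) ∘ hA.1.eigenvalues) *
    (star hA.1.eigenvectorUnitary : Matrix n n ℝ)

/-- The Gaussian law `N_d(m, S)` on `ℝ^d`, defined as the image of the standard Gaussian
by `z ↦ m + S^{1/2} z`. -/
noncomputable def gaussianPi {d : ℕ} (m : Fin d → ℝ) {S : Matrix (Fin d) (Fin d) ℝ}
    (hS : S.PosSemidef) : Measure (Fin d → ℝ) :=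
  Measure.map (fun z => m + hS.sqrt.mulVec z) (stdGaussianPi d)

/-- Convex order between measures: `μ ≤_cx ν`. -/
def ConvexOrder {E : Type*} [NormedAddCommGroup E] [NormedSpace ℝ E] [MeasurableSpace E]
    (μ ν : Measure E) : Prop :=
  ∀ φ : E → ℝ, ConvexOn ℝ Set.univ φ → Integrable φ μ → Integrable φ ν →
    ∫ x, φ x ∂μ ≤ ∫ x, φ x ∂ν
section aux
open Real

lemma sq_toNNReal' (c : ℝ) : ((⟨c^2, sq_nonneg c⟩ : NNReal) * 1) = (c^2).toNNReal := by
  ext; simp [Real.coe_toNNReal _ (sq_nonneg c)]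

lemma gauss_map (c m : ℝ) :
    (gaussianReal 0 1).map (fun z => c * z + m) = gaussianReal m ((c^2).toNNReal) := by
  have h1 : (gaussianReal 0 1).map (fun z => c * z) = gaussianReal 0 ((c^2).toNNReal) := by
    have := gaussianReal_map_const_mul (μ := 0) (v := 1) c
    rw [mul_zero] at this
    rw [this]
    congr 1
    ext; simp [Real.coe_toNNReal _ (sq_nonneg c)]
  have h2 : (fun z : ℝ => c * z + m) = (fun y => y + m) ∘ (fun z => c * z) := rfl
  rw [h2, ← Measure.map_map (measurable_add_const m) (measurable_const_mul c), h1,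
    gaussianReal_map_add_const m, zero_add]

lemma integrable_gauss_iff {φ : ℝ → ℝ} (hφ : Continuous φ) (c m : ℝ) :
    Integrable φ (gaussianReal m ((c^2).toNNReal)) ↔
      Integrable (fun z => φ (c * z + m)) (gaussianReal 0 1) := by
  rw [← gauss_map c m, integrable_map_measure hφ.aestronglyMeasurable
    ((measurable_const_mul c).add_const m).aemeasurable]
  rfl

lemma integral_gauss {φ : ℝ → ℝ} (hφ : Continuous φ) (c m : ℝ) :
    ∫ x, φ x ∂(gaussianReal m ((c^2).toNNReal)) = ∫ z, φ (c * z + m) ∂(gaussianReal 0 1) := by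
  rw [← gauss_map c m, integral_map ((measurable_const_mul c).add_const m).aemeasurable
    hφ.aestronglyMeasurable]

lemma gauss_neg : (gaussianReal 0 1).map (fun z : ℝ => -z) = gaussianReal 0 1 := by
  have := gaussianReal_map_const_mul (μ := 0) (v := 1) (-1)
  simp only [neg_one_mul, mul_zero] at this
  rw [this]
  congr 1
  ext; norm_num

lemma integral_comp_neg {g : ℝ → ℝ} (hg : AEStronglyMeasurable g (gaussianReal 0 1)) :
    ∫ z, g (-z) ∂(gaussianReal 0 1) = ∫ z, g z ∂(gaussianReal 0 1) := by
  conv_rhs => rw [← gauss_neg]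
  rw [integral_map measurable_neg.aemeasurable (by rwa [gauss_neg])]

lemma integrable_comp_neg {g : ℝ → ℝ} (hg : AEStronglyMeasurable g (gaussianReal 0 1)) :
    Integrable (fun z => g (-z)) (gaussianReal 0 1) ↔ Integrable g (gaussianReal 0 1) := by
  conv_rhs => rw [← gauss_neg]
  rw [integrable_map_measure (by rwa [gauss_neg]) measurable_neg.aemeasurable]
  rfl

lemma integrable_abs_gauss : Integrable (fun z : ℝ => |z|) (gaussianReal 0 1) := by
  rw [gaussianReal_of_var_ne_zero 0 one_ne_zero,
    integrable_withDensity_iff (measurable_gaussianPDF 0 1)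
      (ae_of_all _ fun x => ENNReal.ofReal_lt_top)]
  have h0 : Integrable (fun x : ℝ => x * Real.exp (-(2⁻¹:ℝ) * x^2)) volume := by
    simpa [Real.rpow_one] using integrable_rpow_mul_exp_neg_mul_sq
      (by norm_num : (0:ℝ) < 2⁻¹) (by norm_num : (-1:ℝ) < 1)
  have h1 : Integrable (fun x : ℝ => |x| * Real.exp (-(2⁻¹:ℝ) * x^2)) volume := by
    simpa [abs_mul, abs_of_pos (Real.exp_pos _)] using h0.abs
  have h2 := h1.const_mul (√(2 * π * (1:ℝ)))⁻¹
  refine h2.congr (ae_of_all _ fun x => ?_)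
  unfold gaussianPDF gaussianPDFReal
  simp only [ENNReal.toReal_ofReal (by positivity : (0:ℝ) ≤ (√(2 * π * ((1:NNReal):ℝ)))⁻¹ * rexp (-(x - 0)^2 / (2 * ((1:NNReal):ℝ))))]
  have h3 : -(x - 0)^2 / (2 * ((1:NNReal):ℝ)) = -(2⁻¹:ℝ) * x^2 := by norm_num; ring
  simp only [h3]
  push_cast
  ring

end aux

theorem stmt4 {n : ℕ} (hn : 2 ≤ n) (σ : ℝ) (σs : Fin n → ℝ)
    (hσ : 0 ≤ σ) (hσs : ∀ i, 0 ≤ σs i)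
    (p : Fin n → ℝ) (hp : ∀ i, p i ∈ Set.Ioo (0:ℝ) 1) (hp1 : ∑ i, p i = 1) :
    (∀ x : Fin n → ℝ, ∑ i, p i * x i = 0 →
        ConvexOrder (gaussianReal 0 (σ ^ 2).toNNReal)
          (∑ i, ENNReal.ofReal (p i) • gaussianReal (x i) ((σs i ^ 2).toNNReal))) ↔
      σ ≤ ∑ i, p i * σs i := by
  have hpne : ∀ i, ENNReal.ofReal (p i) ≠ 0 := fun i => by
    simp [ENNReal.ofReal_eq_zero, not_le, (hp i).1]
  have hptr : ∀ i, (ENNReal.ofReal (p i)).toReal = p i :=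
    fun i => ENNReal.toReal_ofReal (hp i).1.le
  constructor
  · intro h
    have h0 := h 0 (by simp)
    set γ := gaussianReal 0 1 with hγ
    have hAint : Integrable (fun z : ℝ => |z|) γ := integrable_abs_gauss
    set A := ∫ z, |z| ∂γ with hA
    have hApos : 0 < A := by
      rw [hA, integral_pos_iff_support_of_nonneg (fun z => abs_nonneg z) hAint]
      have hs : Function.support (fun z : ℝ => |z|) = {(0:ℝ)}ᶜ := by
        ext z; simp [Function.support]
      rw [hs]
      have h1 : γ {(0:ℝ)} = 0 :=
        gaussianReal_absolutelyContinuous 0 one_ne_zero (measure_singleton 0)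
      have h2 : γ {(0:ℝ)}ᶜ = 1 := by
        rw [measure_compl (measurableSet_singleton 0) (measure_ne_top _ _), h1, measure_univ,
          tsub_zero]
      rw [h2]; exact zero_lt_one
    have habs : ConvexOn ℝ Set.univ (fun z : ℝ => |z|) := by
      refine ⟨convex_univ, fun x _ y _ a b ha hb _ => ?_⟩
      simp only [smul_eq_mul]
      exact (abs_add_le _ _).trans_eq (by rw [abs_mul, abs_mul, abs_of_nonneg ha, abs_of_nonneg hb])
    -- integrability wrt components
    have hcompint : ∀ c : ℝ, 0 ≤ c → Integrable (fun z : ℝ => |c * z + 0|) γ := by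
      intro c hc
      have := hAint.const_mul c
      refine this.congr (ae_of_all _ fun z => ?_)
      simp [abs_mul, abs_of_nonneg hc, mul_comm]
    have hintL : Integrable (fun z : ℝ => |z|) (gaussianReal 0 ((σ^2).toNNReal)) :=
      (integrable_gauss_iff continuous_abs σ 0).2 (hcompint σ hσ)
    have hintC : ∀ i, Integrable (fun z : ℝ => |z|)
        (gaussianReal ((0 : Fin n → ℝ) i) ((σs i ^2).toNNReal)) := fun i => by
      simpa using (integrable_gauss_iff continuous_abs (σs i) 0).2 (hcompint (σs i) (hσs i))
    have hintR : Integrable (fun z : ℝ => |z|)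
        (∑ i, ENNReal.ofReal (p i) • gaussianReal ((0 : Fin n → ℝ) i) ((σs i ^2).toNNReal)) := by
      refine integrable_finset_sum_measure.2 fun i _ => ?_
      exact (integrable_smul_measure (hpne i) ENNReal.ofReal_ne_top).2 (hintC i)
    have key := h0 (fun z => |z|) habs hintL hintR
    have hgL : ∫ z, |z| ∂(gaussianReal 0 ((σ^2).toNNReal)) = σ * A := by
      rw [integral_gauss continuous_abs σ 0]
      simp only [add_zero, abs_mul, abs_of_nonneg hσ]
      rw [integral_const_mul]
    have hgC : ∀ i, ∫ z, |z| ∂(gaussianReal ((0 : Fin n → ℝ) i) ((σs i ^2).toNNReal))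
        = σs i * A := fun i => by
      simp only [Pi.zero_apply]
      rw [integral_gauss continuous_abs (σs i) 0]
      simp only [add_zero, abs_mul, abs_of_nonneg (hσs i)]
      rw [integral_const_mul]
    have hgR : ∫ z, |z| ∂(∑ i, ENNReal.ofReal (p i)
          • gaussianReal ((0 : Fin n → ℝ) i) ((σs i ^2).toNNReal))
        = (∑ i, p i * σs i) * A := by
      rw [integral_finset_sum_measure (fun i _ =>
        (integrable_smul_measure (hpne i) ENNReal.ofReal_ne_top).2 (hintC i))]
      rw [Finset.sum_mul]
      refine Finset.sum_congr rfl fun i _ => ?_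
      rw [integral_smul_measure, hgC i, hptr i, smul_eq_mul]
      ring
    rw [hgL, hgR] at key
    exact le_of_mul_le_mul_right key hApos
  · -- sufficiency
    intro hle x hx φ hφconv hφμ hφν
    set γ := gaussianReal 0 1 with hγ
    have hφc : Continuous φ := by
      have h := hφconv.continuousOn isOpen_univ
      exact continuousOn_univ.mp h
    set τ := ∑ i, p i * σs i with hτ
    have hτ0 : 0 ≤ τ := Finset.sum_nonneg fun i _ => mul_nonneg (hp i).1.le (hσs i)
    -- component integrability
    have hcomp : ∀ i, Integrable φ (gaussianReal (x i) ((σs i ^2).toNNReal)) := fun i => by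
      have := integrable_finset_sum_measure.1 hφν i (Finset.mem_univ i)
      exact (integrable_smul_measure (hpne i) ENNReal.ofReal_ne_top).1 this
    have hcomp' : ∀ i, Integrable (fun z => φ (σs i * z + x i)) γ := fun i =>
      (integrable_gauss_iff hφc _ _).1 (hcomp i)
    set U : ℝ → ℝ := fun z => ∑ i, p i * φ (σs i * z + x i) with hU
    have hUint : Integrable U γ :=
      integrable_finset_sum _ fun i _ => (hcomp' i).const_mul _
    have hUc : Continuous U := by
      refine continuous_finset_sum _ fun i _ => ?_
      exact continuous_const.mul (hφc.comp (by continuity))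
    have hUnegint : Integrable (fun z => U (-z)) γ :=
      (integrable_comp_neg hUc.aestronglyMeasurable).2 hUint
    set g : ℝ → ℝ := fun z => φ (τ * z) with hg
    have hgc : Continuous g := hφc.comp (continuous_const.mul continuous_id)
    -- pointwise Jensen : g ≤ U
    have hsum : ∀ z : ℝ, ∑ i, p i • (σs i * z + x i) = τ * z := by
      intro z
      simp only [smul_eq_mul, mul_add]
      rw [Finset.sum_add_distrib, hx, add_zero, hτ, Finset.sum_mul]
      refine Finset.sum_congr rfl fun i _ => by ring
    have hgU : ∀ z, g z ≤ U z := by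
      intro z
      have := hφconv.map_sum_le (t := Finset.univ) (w := p) (p := fun i => σs i * z + x i)
        (fun i _ => (hp i).1.le) hp1 (fun i _ => Set.mem_univ _)
      rw [hsum z] at this
      simpa [hU, smul_eq_mul] using this
    -- symmetry lower bound : φ 0 ≤ (g z + g (-z))/2
    have hmid : ∀ z : ℝ, φ 0 ≤ (g z + g (-z)) / 2 := by
      intro z
      have h2 := hφconv.2 (Set.mem_univ (τ * z)) (Set.mem_univ (-(τ * z)))
        (by norm_num : (0:ℝ) ≤ 1/2) (by norm_num : (0:ℝ) ≤ 1/2) (by norm_num)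
      simp only [smul_eq_mul] at h2
      have he : (1/2 : ℝ) * (τ * z) + 1/2 * -(τ * z) = 0 := by ring
      rw [he] at h2
      calc φ 0 ≤ 1/2 * φ (τ * z) + 1/2 * φ (-(τ * z)) := h2
        _ = (g z + g (-z)) / 2 := by
            simp only [hg, mul_neg]; ring_nf
    -- integrability of g
    have hgint : Integrable g γ := by
      refine Integrable.mono' (hUint.abs.add ((hUnegint.sub (integrable_const (2 * φ 0))).abs))
        hgc.aestronglyMeasurable (ae_of_all _ fun z => ?_)
      have h1 : g z ≤ U z := hgU z
      have h2 : 2 * φ 0 - U (-z) ≤ g z := by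
        have := hmid z
        have h3 : g (-z) ≤ U (-z) := hgU (-z)
        linarith
      simp only [Pi.add_apply, Pi.sub_apply, Real.norm_eq_abs]
      rw [abs_le]
      have e1 := neg_abs_le (U (-z) - 2 * φ 0)
      have e1b := le_abs_self (U (-z) - 2 * φ 0)
      have e2 := le_abs_self (U z)
      have e3 := abs_nonneg (U z)
      have e4 := abs_nonneg (U (-z) - 2 * φ 0)
      constructor <;> linarith
    have hgnegint : Integrable (fun z => g (-z)) γ :=
      (integrable_comp_neg hgc.aestronglyMeasurable).2 hgint
    -- φ 0 ≤ ∫ g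
    have hφ0 : φ 0 ≤ ∫ z, g z ∂γ := by
      have hconst : ∫ _z, φ 0 ∂γ = φ 0 := by
        simp [hγ]
      calc φ 0 = ∫ _z, φ 0 ∂γ := hconst.symm
        _ ≤ ∫ z, (g z + g (-z)) / 2 ∂γ := by
            refine integral_mono (integrable_const _) ((hgint.add hgnegint).div_const 2)
              fun z => hmid z
        _ = ((∫ z, g z ∂γ) + ∫ z, g (-z) ∂γ) / 2 := by
            rw [integral_div, integral_add hgint hgnegint]
        _ = ∫ z, g z ∂γ := by
            rw [integral_comp_neg hgc.aestronglyMeasurable]; ring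
    -- step a : ∫ φ(σ z) ≤ ∫ g
    have hφμ' : Integrable (fun z => φ (σ * z + 0)) γ := (integrable_gauss_iff hφc σ 0).1 hφμ
    have hstepa : ∫ z, φ (σ * z + 0) ∂γ ≤ ∫ z, g z ∂γ := by
      rcases eq_or_lt_of_le hτ0 with hτz | hτpos
      · have hσ0 : σ = 0 := le_antisymm (hle.trans_eq hτz.symm) hσ
        have : ∀ z : ℝ, φ (σ * z + 0) = g z := by
          intro z; simp [hσ0, hg, ← hτz]
        simp only [this]
        exact le_rfl
      · set a := σ / τ with ha
        have ha0 : 0 ≤ a := div_nonneg hσ hτpos.le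
        have ha1 : a ≤ 1 := (div_le_one hτpos).2 hle
        have hpt : ∀ z : ℝ, φ (σ * z + 0) ≤ a * g z + (1 - a) * φ 0 := by
          intro z
          have h2 := hφconv.2 (Set.mem_univ (τ * z)) (Set.mem_univ (0:ℝ)) ha0
            (by linarith : (0:ℝ) ≤ 1 - a) (by ring : a + (1 - a) = 1)
          simp only [smul_eq_mul, mul_zero, add_zero] at h2
          have he : a * (τ * z) = σ * z + 0 := by
            rw [add_zero, ha]
            field_simp
          rw [he] at h2
          simpa [hg] using h2
        calc ∫ z, φ (σ * z + 0) ∂γ ≤ ∫ z, (a * g z + (1 - a) * φ 0) ∂γ := by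
              refine integral_mono hφμ' ?_ hpt
              exact (hgint.const_mul a).add (integrable_const _)
          _ = a * (∫ z, g z ∂γ) + (1 - a) * φ 0 := by
              rw [integral_add (hgint.const_mul a) (integrable_const _), integral_const_mul,
                integral_const]
              simp [hγ]
          _ ≤ a * (∫ z, g z ∂γ) + (1 - a) * (∫ z, g z ∂γ) := by
              have := mul_le_mul_of_nonneg_left hφ0 (by linarith : (0:ℝ) ≤ 1 - a)
              linarith
          _ = ∫ z, g z ∂γ := by ring
    -- assemble
    have hRHS : ∫ y, φ y ∂(∑ i, ENNReal.ofReal (p i) • gaussianReal (x i) ((σs i ^2).toNNReal))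
        = ∑ i, p i * ∫ z, φ (σs i * z + x i) ∂γ := by
      rw [integral_finset_sum_measure (fun i _ =>
        (integrable_smul_measure (hpne i) ENNReal.ofReal_ne_top).2 (hcomp i))]
      refine Finset.sum_congr rfl fun i _ => ?_
      rw [integral_smul_measure, hptr i, smul_eq_mul, integral_gauss hφc]
    calc ∫ y, φ y ∂(gaussianReal 0 ((σ^2).toNNReal)) = ∫ z, φ (σ * z + 0) ∂γ :=
          integral_gauss hφc σ 0
      _ ≤ ∫ z, g z ∂γ := hstepa
      _ ≤ ∫ z, U z ∂γ := integral_mono hgint hUint hgU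
      _ = ∑ i, p i * ∫ z, φ (σs i * z + x i) ∂γ := by
          rw [hU, integral_finset_sum _ fun i _ => (hcomp' i).const_mul _]
          exact Finset.sum_congr rfl fun i _ => integral_const_mul _ _
      _ = _ := hRHS.symm
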